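/- Let J be a finite set and x : J → ℝ with x_{j'} > 0 for all j' ∈ J. Fix j ∈ J, a real t ≥ 0, reals k > 0 and κ > 0, and set s = 2. Let S ⊆ J be a set with x_{j'} ≤ x_j for every j' ∈ S, and let Q ⊆ J. Suppose ∑_{j' ∈ S \ Q} x_{j'} ≤ k·s·t. Define α = (∑_{j' ∈ S} x_{j'})/(k·s) + x_j/(s·κ) and β = |Q|/s. Then α/x_j − β/k ≤ t/x_j + 1/(2κ). -/

import Mathlib

/-- Core of Lemma `lem:feasible` (dual feasibility at speed `s = 2`) in Appendix A:
with `S` the set of jobs no larger than job `j`, `Q` the set of jobs unfinished at time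
`t`, and the completed-work bound `∑_{j' ∈ S \ Q} x_{j'} ≤ k·s·t`, the dual variables
`α = (∑_{j'∈S} x_{j'})/(ks) + x_j/(sκ)` and `β = |Q|/s` satisfy the dual constraint. -/
theorem srpt_dual_feasibility
    (J : Type) [Fintype J] [DecidableEq J]
    (x : J → ℝ) (hx : ∀ j', 0 < x j')
    (j : J) (t : ℝ) (ht : 0 ≤ t)
    (k κ s : ℝ) (hk : 0 < k) (hκ : 0 < κ) (hs : s = 2)
    (S Q : Finset J)
    (hS : ∀ j' ∈ S, x j' ≤ x j)
    (hwork : ∑ j' ∈ S \ Q, x j' ≤ k * s * t) :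
    ((∑ j' ∈ S, x j') / (k * s) + x j / (s * κ)) / x j - ((Q.card : ℝ) / s) / k
      ≤ t / x j + 1 / (2 * κ) := by
  subst hs
  have hxj : 0 < x j := hx j
  have hinter : ∑ j' ∈ S ∩ Q, x j' ≤ (Q.card : ℝ) * x j := by
    calc ∑ j' ∈ S ∩ Q, x j' ≤ (S ∩ Q).card • x j :=
          Finset.sum_le_card_nsmul _ _ _ (fun i hi => hS i (Finset.mem_inter.1 hi).1)
      _ = ((S ∩ Q).card : ℝ) * x j := by simp [nsmul_eq_mul]
      _ ≤ (Q.card : ℝ) * x j := by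
          apply mul_le_mul_of_nonneg_right _ hxj.le
          exact_mod_cast Finset.card_le_card (Finset.inter_subset_right)
  have hsplit : ∑ j' ∈ S ∩ Q, x j' + ∑ j' ∈ S \ Q, x j' = ∑ j' ∈ S, x j' :=
    Finset.sum_inter_add_sum_sdiff S Q x
  have key : ∑ j' ∈ S, x j' ≤ k * 2 * t + (Q.card : ℝ) * x j := by linarith
  have hpos : (0:ℝ) < k * 2 * x j := by positivity
  have h1 : (∑ j' ∈ S, x j') / (k * 2 * x j)
      ≤ (k * 2 * t + (Q.card : ℝ) * x j) / (k * 2 * x j) :=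
    div_le_div_of_nonneg_right key hpos.le
  have h2 : (k * 2 * t + (Q.card : ℝ) * x j) / (k * 2 * x j)
      = t / x j + (Q.card : ℝ) / (2 * k) := by
    field_simp
  have h3 : ((∑ j' ∈ S, x j') / (k * 2) + x j / (2 * κ)) / x j
      = (∑ j' ∈ S, x j') / (k * 2 * x j) + 1 / (2 * κ) := by
    field_simp
  have h4 : ((Q.card : ℝ) / 2) / k = (Q.card : ℝ) / (2 * k) := by
    rw [div_div]
  rw [h3, h4]
  linarith [h1, h2.le]
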